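/- The neighborhood N = {(0,1), (1,0), (1,−1), (−1,−1)} (neighborhood 195 in the 8-bit numbering of subsets of the Moore neighborhood) admits a timed crossover gate of size 12 × 12 and delay 17. -/
import Mathlib


/-! Sandpile models on ℤ² and timed crossover gates. -/

abbrev Cell : Type := ℤ × ℤ
abbrev Config : Type := Cell → ℕ

namespace Sandpile

/-- The threshold of a sandpile model is the cardinality of its neighborhood. -/
def θ (𝒩 : Finset Cell) : ℕ := 𝒩.card

/-- The parallel sandpile dynamics: each cell reaching the threshold topples,
sending one grain to each of its out-neighbors. -/
def F (𝒩 : Finset Cell) (c : Config) : Config := fun p =>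
  c p - θ 𝒩 * (if θ 𝒩 ≤ c p then 1 else 0)
    + ∑ p' ∈ 𝒩, (if θ 𝒩 ≤ c (p - p') then 1 else 0)

/-- The configuration with a single grain at cell `p`. -/
def one (p : Cell) : Config := fun q => if q = p then 1 else 0

/-- A configuration is stable when every cell is below the threshold. -/
def Stable (𝒩 : Finset Cell) (c : Config) : Prop := ∀ p, c p < θ 𝒩

/-- The rectangle {0,…,M−1} × {0,…,N'−1}. -/
def Rect (M N' : ℕ) : Set Cell :=
  {p | 0 ≤ p.1 ∧ p.1 < (M : ℤ) ∧ 0 ≤ p.2 ∧ p.2 < (N' : ℤ)}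

/-- The four corners of the rectangle. -/
def Corners (M N' : ℕ) : Set Cell :=
  {(0, 0), ((M : ℤ) - 1, 0), (0, (N' : ℤ) - 1), ((M : ℤ) - 1, (N' : ℤ) - 1)}

/-- The four sides of the rectangle. -/
def side (M N' : ℕ) (i : Fin 4) : Set Cell :=
  if i = 0 then {p | p.1 = 0 ∧ 0 ≤ p.2 ∧ p.2 < (N' : ℤ)}
  else if i = 1 then {p | p.2 = 0 ∧ 0 ≤ p.1 ∧ p.1 < (M : ℤ)}
  else if i = 2 then {p | p.1 = (M : ℤ) - 1 ∧ 0 ≤ p.2 ∧ p.2 < (N' : ℤ)}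
  else {p | p.2 = (N' : ℤ) - 1 ∧ 0 ≤ p.1 ∧ p.1 < (M : ℤ)}

/-- A timed crossover gate of size M × N' and delay T for the sandpile model 𝒩:
a stable configuration `g` supported on the rectangle, together with four
non-corner cells `n`, `e`, `s`, `w` on four pairwise different sides, `n, s`
(resp. `w, e`) on opposite sides, such that adding a grain at `n` (resp. `w`)
makes `s` (resp. `e`) reach the threshold at time exactly `T`, while no cell
on the two other sides reaches the threshold at any time `t ≤ T`. -/
def IsTimedCrossoverGate (𝒩 : Finset Cell) (M N' T : ℕ)
    (g : Config) (n e s w : Cell) : Prop :=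
  Stable 𝒩 g ∧
  (∀ p, p ∉ Rect M N' → g p = 0) ∧
  n ∈ Rect M N' ∧ e ∈ Rect M N' ∧ s ∈ Rect M N' ∧ w ∈ Rect M N' ∧
  n ∉ Corners M N' ∧ e ∉ Corners M N' ∧ s ∉ Corners M N' ∧ w ∉ Corners M N' ∧
  ∃ iN iE iS iW : Fin 4,
    n ∈ side M N' iN ∧ e ∈ side M N' iE ∧ s ∈ side M N' iS ∧ w ∈ side M N' iW ∧
    ((iN : ℤ) - (iS : ℤ)).natAbs = 2 ∧
    ((iW : ℤ) - (iE : ℤ)).natAbs = 2 ∧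
    ({iN, iE, iS, iW} : Finset (Fin 4)) = Finset.univ ∧
    θ 𝒩 ≤ (F 𝒩)^[T] (g + one n) s ∧
    (∀ p ∈ side M N' iW ∪ side M N' iE, ∀ t ≤ T, (F 𝒩)^[t] (g + one n) p < θ 𝒩) ∧
    θ 𝒩 ≤ (F 𝒩)^[T] (g + one w) e ∧
    (∀ p ∈ side M N' iN ∪ side M N' iS, ∀ t ≤ T, (F 𝒩)^[t] (g + one w) p < θ 𝒩)


/-! ### Auxiliary definitions for the crossover gate construction -/

def NBL : Finset Cell := {(0,1),(1,0),(1,-1),(-1,-1)}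

def boxed (d : List (List ℕ)) : Config := fun p =>
  if -1 ≤ p.1 ∧ p.1 ≤ 12 ∧ -1 ≤ p.2 ∧ p.2 ≤ 12 then
    (d.getD (p.2+1).toNat []).getD (p.1+1).toNat 0 else 0

def dN : ℕ → List (List ℕ)
  | 0 => [
  [0,0,0,0,0,0,0,0,0,0,0,0,0,0],
  [0,0,0,0,0,0,0,0,0,3,0,0,0,0],
  [0,3,3,0,0,0,0,0,3,0,0,3,3,0],
  [0,0,3,0,0,0,0,0,0,3,3,0,0,0],
  [0,0,3,3,0,0,0,0,0,3,3,0,0,0],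
  [0,0,0,3,0,0,0,3,3,0,0,3,0,0],
  [0,0,0,3,0,0,3,0,0,0,3,0,0,0],
  [0,0,0,3,0,3,0,0,0,3,0,0,0,0],
  [0,0,0,3,3,0,0,0,0,0,3,0,0,0],
  [0,0,0,0,0,0,0,0,0,0,0,3,0,0],
  [0,0,0,0,0,0,3,3,3,0,3,0,0,0],
  [0,0,0,0,3,3,0,0,3,3,0,0,0,0],
  [0,0,0,4,0,0,0,0,0,0,0,0,0,0],
  [0,0,0,0,0,0,0,0,0,0,0,0,0,0]]
  | 1 => [
  [0,0,0,0,0,0,0,0,0,0,0,0,0,0],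
  [0,0,0,0,0,0,0,0,0,3,0,0,0,0],
  [0,3,3,0,0,0,0,0,3,0,0,3,3,0],
  [0,0,3,0,0,0,0,0,0,3,3,0,0,0],
  [0,0,3,3,0,0,0,0,0,3,3,0,0,0],
  [0,0,0,3,0,0,0,3,3,0,0,3,0,0],
  [0,0,0,3,0,0,3,0,0,0,3,0,0,0],
  [0,0,0,3,0,3,0,0,0,3,0,0,0,0],
  [0,0,0,3,3,0,0,0,0,0,3,0,0,0],
  [0,0,0,0,0,0,0,0,0,0,0,3,0,0],
  [0,0,0,0,0,0,3,3,3,0,3,0,0,0],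
  [0,0,1,0,4,3,0,0,3,3,0,0,0,0],
  [0,0,0,0,1,0,0,0,0,0,0,0,0,0],
  [0,0,0,1,0,0,0,0,0,0,0,0,0,0]]
  | 2 => [
  [0,0,0,0,0,0,0,0,0,0,0,0,0,0],
  [0,0,0,0,0,0,0,0,0,3,0,0,0,0],
  [0,3,3,0,0,0,0,0,3,0,0,3,3,0],
  [0,0,3,0,0,0,0,0,0,3,3,0,0,0],
  [0,0,3,3,0,0,0,0,0,3,3,0,0,0],
  [0,0,0,3,0,0,0,3,3,0,0,3,0,0],
  [0,0,0,3,0,0,3,0,0,0,3,0,0,0],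
  [0,0,0,3,0,3,0,0,0,3,0,0,0,0],
  [0,0,0,3,3,0,0,0,0,0,3,0,0,0],
  [0,0,0,0,0,0,0,0,0,0,0,3,0,0],
  [0,0,0,1,0,1,3,3,3,0,3,0,0,0],
  [0,0,1,0,0,4,0,0,3,3,0,0,0,0],
  [0,0,0,0,2,0,0,0,0,0,0,0,0,0],
  [0,0,0,1,0,0,0,0,0,0,0,0,0,0]]
  | 3 => [
  [0,0,0,0,0,0,0,0,0,0,0,0,0,0],
  [0,0,0,0,0,0,0,0,0,3,0,0,0,0],
  [0,3,3,0,0,0,0,0,3,0,0,3,3,0],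
  [0,0,3,0,0,0,0,0,0,3,3,0,0,0],
  [0,0,3,3,0,0,0,0,0,3,3,0,0,0],
  [0,0,0,3,0,0,0,3,3,0,0,3,0,0],
  [0,0,0,3,0,0,3,0,0,0,3,0,0,0],
  [0,0,0,3,0,3,0,0,0,3,0,0,0,0],
  [0,0,0,3,3,0,0,0,0,0,3,0,0,0],
  [0,0,0,0,0,0,0,0,0,0,0,3,0,0],
  [0,0,0,1,1,1,4,3,3,0,3,0,0,0],
  [0,0,1,0,0,0,1,0,3,3,0,0,0,0],
  [0,0,0,0,2,1,0,0,0,0,0,0,0,0],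
  [0,0,0,1,0,0,0,0,0,0,0,0,0,0]]
  | 4 => [
  [0,0,0,0,0,0,0,0,0,0,0,0,0,0],
  [0,0,0,0,0,0,0,0,0,3,0,0,0,0],
  [0,3,3,0,0,0,0,0,3,0,0,3,3,0],
  [0,0,3,0,0,0,0,0,0,3,3,0,0,0],
  [0,0,3,3,0,0,0,0,0,3,3,0,0,0],
  [0,0,0,3,0,0,0,3,3,0,0,3,0,0],
  [0,0,0,3,0,0,3,0,0,0,3,0,0,0],
  [0,0,0,3,0,3,0,0,0,3,0,0,0,0],
  [0,0,0,3,3,0,0,0,0,0,3,0,0,0],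
  [0,0,0,0,0,1,0,1,0,0,0,3,0,0],
  [0,0,0,1,1,1,0,4,3,0,3,0,0,0],
  [0,0,1,0,0,0,2,0,3,3,0,0,0,0],
  [0,0,0,0,2,1,0,0,0,0,0,0,0,0],
  [0,0,0,1,0,0,0,0,0,0,0,0,0,0]]
  | 5 => [
  [0,0,0,0,0,0,0,0,0,0,0,0,0,0],
  [0,0,0,0,0,0,0,0,0,3,0,0,0,0],
  [0,3,3,0,0,0,0,0,3,0,0,3,3,0],
  [0,0,3,0,0,0,0,0,0,3,3,0,0,0],
  [0,0,3,3,0,0,0,0,0,3,3,0,0,0],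
  [0,0,0,3,0,0,0,3,3,0,0,3,0,0],
  [0,0,0,3,0,0,3,0,0,0,3,0,0,0],
  [0,0,0,3,0,3,0,0,0,3,0,0,0,0],
  [0,0,0,3,3,0,0,0,0,0,3,0,0,0],
  [0,0,0,0,0,1,1,1,1,0,0,3,0,0],
  [0,0,0,1,1,1,0,0,4,0,3,0,0,0],
  [0,0,1,0,0,0,2,1,3,3,0,0,0,0],
  [0,0,0,0,2,1,0,0,0,0,0,0,0,0],
  [0,0,0,1,0,0,0,0,0,0,0,0,0,0]]
  | 6 => [
  [0,0,0,0,0,0,0,0,0,0,0,0,0,0],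
  [0,0,0,0,0,0,0,0,0,3,0,0,0,0],
  [0,3,3,0,0,0,0,0,3,0,0,3,3,0],
  [0,0,3,0,0,0,0,0,0,3,3,0,0,0],
  [0,0,3,3,0,0,0,0,0,3,3,0,0,0],
  [0,0,0,3,0,0,0,3,3,0,0,3,0,0],
  [0,0,0,3,0,0,3,0,0,0,3,0,0,0],
  [0,0,0,3,0,3,0,0,0,3,0,0,0,0],
  [0,0,0,3,3,0,0,0,0,0,3,0,0,0],
  [0,0,0,0,0,1,1,2,1,1,0,3,0,0],
  [0,0,0,1,1,1,0,0,0,1,3,0,0,0],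
  [0,0,1,0,0,0,2,1,4,3,0,0,0,0],
  [0,0,0,0,2,1,0,0,0,0,0,0,0,0],
  [0,0,0,1,0,0,0,0,0,0,0,0,0,0]]
  | 7 => [
  [0,0,0,0,0,0,0,0,0,0,0,0,0,0],
  [0,0,0,0,0,0,0,0,0,3,0,0,0,0],
  [0,3,3,0,0,0,0,0,3,0,0,3,3,0],
  [0,0,3,0,0,0,0,0,0,3,3,0,0,0],
  [0,0,3,3,0,0,0,0,0,3,3,0,0,0],
  [0,0,0,3,0,0,0,3,3,0,0,3,0,0],
  [0,0,0,3,0,0,3,0,0,0,3,0,0,0],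
  [0,0,0,3,0,3,0,0,0,3,0,0,0,0],
  [0,0,0,3,3,0,0,0,0,0,3,0,0,0],
  [0,0,0,0,0,1,1,2,1,1,0,3,0,0],
  [0,0,0,1,1,1,0,1,0,2,3,0,0,0],
  [0,0,1,0,0,0,2,1,0,4,0,0,0,0],
  [0,0,0,0,2,1,0,0,1,0,0,0,0,0],
  [0,0,0,1,0,0,0,0,0,0,0,0,0,0]]
  | 8 => [
  [0,0,0,0,0,0,0,0,0,0,0,0,0,0],
  [0,0,0,0,0,0,0,0,0,3,0,0,0,0],
  [0,3,3,0,0,0,0,0,3,0,0,3,3,0],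
  [0,0,3,0,0,0,0,0,0,3,3,0,0,0],
  [0,0,3,3,0,0,0,0,0,3,3,0,0,0],
  [0,0,0,3,0,0,0,3,3,0,0,3,0,0],
  [0,0,0,3,0,0,3,0,0,0,3,0,0,0],
  [0,0,0,3,0,3,0,0,0,3,0,0,0,0],
  [0,0,0,3,3,0,0,0,0,0,3,0,0,0],
  [0,0,0,0,0,1,1,2,1,1,0,3,0,0],
  [0,0,0,1,1,1,0,1,1,2,4,0,0,0],
  [0,0,1,0,0,0,2,1,0,0,1,0,0,0],
  [0,0,0,0,2,1,0,0,1,1,0,0,0,0],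
  [0,0,0,1,0,0,0,0,0,0,0,0,0,0]]
  | 9 => [
  [0,0,0,0,0,0,0,0,0,0,0,0,0,0],
  [0,0,0,0,0,0,0,0,0,3,0,0,0,0],
  [0,3,3,0,0,0,0,0,3,0,0,3,3,0],
  [0,0,3,0,0,0,0,0,0,3,3,0,0,0],
  [0,0,3,3,0,0,0,0,0,3,3,0,0,0],
  [0,0,0,3,0,0,0,3,3,0,0,3,0,0],
  [0,0,0,3,0,0,3,0,0,0,3,0,0,0],
  [0,0,0,3,0,3,0,0,0,3,0,0,0,0],
  [0,0,0,3,3,0,0,0,0,0,3,0,0,0],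
  [0,0,0,0,0,1,1,2,1,2,0,4,0,0],
  [0,0,0,1,1,1,0,1,1,2,0,1,0,0],
  [0,0,1,0,0,0,2,1,0,0,2,0,0,0],
  [0,0,0,0,2,1,0,0,1,1,0,0,0,0],
  [0,0,0,1,0,0,0,0,0,0,0,0,0,0]]
  | 10 => [
  [0,0,0,0,0,0,0,0,0,0,0,0,0,0],
  [0,0,0,0,0,0,0,0,0,3,0,0,0,0],
  [0,3,3,0,0,0,0,0,3,0,0,3,3,0],
  [0,0,3,0,0,0,0,0,0,3,3,0,0,0],
  [0,0,3,3,0,0,0,0,0,3,3,0,0,0],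
  [0,0,0,3,0,0,0,3,3,0,0,3,0,0],
  [0,0,0,3,0,0,3,0,0,0,3,0,0,0],
  [0,0,0,3,0,3,0,0,0,3,0,0,0,0],
  [0,0,0,3,3,0,0,0,0,0,4,0,1,0],
  [0,0,0,0,0,1,1,2,1,2,0,0,1,0],
  [0,0,0,1,1,1,0,1,1,2,0,2,0,0],
  [0,0,1,0,0,0,2,1,0,0,2,0,0,0],
  [0,0,0,0,2,1,0,0,1,1,0,0,0,0],
  [0,0,0,1,0,0,0,0,0,0,0,0,0,0]]
  | 11 => [
  [0,0,0,0,0,0,0,0,0,0,0,0,0,0],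
  [0,0,0,0,0,0,0,0,0,3,0,0,0,0],
  [0,3,3,0,0,0,0,0,3,0,0,3,3,0],
  [0,0,3,0,0,0,0,0,0,3,3,0,0,0],
  [0,0,3,3,0,0,0,0,0,3,3,0,0,0],
  [0,0,0,3,0,0,0,3,3,0,0,3,0,0],
  [0,0,0,3,0,0,3,0,0,0,3,0,0,0],
  [0,0,0,3,0,3,0,0,0,4,0,1,0,0],
  [0,0,0,3,3,0,0,0,0,0,0,1,1,0],
  [0,0,0,0,0,1,1,2,1,2,1,0,1,0],
  [0,0,0,1,1,1,0,1,1,2,0,2,0,0],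
  [0,0,1,0,0,0,2,1,0,0,2,0,0,0],
  [0,0,0,0,2,1,0,0,1,1,0,0,0,0],
  [0,0,0,1,0,0,0,0,0,0,0,0,0,0]]
  | 12 => [
  [0,0,0,0,0,0,0,0,0,0,0,0,0,0],
  [0,0,0,0,0,0,0,0,0,3,0,0,0,0],
  [0,3,3,0,0,0,0,0,3,0,0,3,3,0],
  [0,0,3,0,0,0,0,0,0,3,3,0,0,0],
  [0,0,3,3,0,0,0,0,0,3,3,0,0,0],
  [0,0,0,3,0,0,0,3,3,0,0,3,0,0],
  [0,0,0,3,0,0,3,0,1,0,4,0,0,0],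
  [0,0,0,3,0,3,0,0,0,0,1,1,0,0],
  [0,0,0,3,3,0,0,0,0,1,0,1,1,0],
  [0,0,0,0,0,1,1,2,1,2,1,0,1,0],
  [0,0,0,1,1,1,0,1,1,2,0,2,0,0],
  [0,0,1,0,0,0,2,1,0,0,2,0,0,0],
  [0,0,0,0,2,1,0,0,1,1,0,0,0,0],
  [0,0,0,1,0,0,0,0,0,0,0,0,0,0]]
  | 13 => [
  [0,0,0,0,0,0,0,0,0,0,0,0,0,0],
  [0,0,0,0,0,0,0,0,0,3,0,0,0,0],
  [0,3,3,0,0,0,0,0,3,0,0,3,3,0],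
  [0,0,3,0,0,0,0,0,0,3,3,0,0,0],
  [0,0,3,3,0,0,0,0,0,3,3,0,0,0],
  [0,0,0,3,0,0,0,3,3,1,0,4,0,0],
  [0,0,0,3,0,0,3,0,1,0,0,1,0,0],
  [0,0,0,3,0,3,0,0,0,0,2,1,0,0],
  [0,0,0,3,3,0,0,0,0,1,0,1,1,0],
  [0,0,0,0,0,1,1,2,1,2,1,0,1,0],
  [0,0,0,1,1,1,0,1,1,2,0,2,0,0],
  [0,0,1,0,0,0,2,1,0,0,2,0,0,0],
  [0,0,0,0,2,1,0,0,1,1,0,0,0,0],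
  [0,0,0,1,0,0,0,0,0,0,0,0,0,0]]
  | 14 => [
  [0,0,0,0,0,0,0,0,0,0,0,0,0,0],
  [0,0,0,0,0,0,0,0,0,3,0,0,0,0],
  [0,3,3,0,0,0,0,0,3,0,0,3,3,0],
  [0,0,3,0,0,0,0,0,0,3,3,0,0,0],
  [0,0,3,3,0,0,0,0,0,3,4,0,1,0],
  [0,0,0,3,0,0,0,3,3,1,0,0,1,0],
  [0,0,0,3,0,0,3,0,1,0,0,2,0,0],
  [0,0,0,3,0,3,0,0,0,0,2,1,0,0],
  [0,0,0,3,3,0,0,0,0,1,0,1,1,0],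
  [0,0,0,0,0,1,1,2,1,2,1,0,1,0],
  [0,0,0,1,1,1,0,1,1,2,0,2,0,0],
  [0,0,1,0,0,0,2,1,0,0,2,0,0,0],
  [0,0,0,0,2,1,0,0,1,1,0,0,0,0],
  [0,0,0,1,0,0,0,0,0,0,0,0,0,0]]
  | 15 => [
  [0,0,0,0,0,0,0,0,0,0,0,0,0,0],
  [0,0,0,0,0,0,0,0,0,3,0,0,0,0],
  [0,3,3,0,0,0,0,0,3,0,0,3,3,0],
  [0,0,3,0,0,0,0,0,0,4,3,1,0,0],
  [0,0,3,3,0,0,0,0,0,3,0,1,1,0],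
  [0,0,0,3,0,0,0,3,3,1,1,0,1,0],
  [0,0,0,3,0,0,3,0,1,0,0,2,0,0],
  [0,0,0,3,0,3,0,0,0,0,2,1,0,0],
  [0,0,0,3,3,0,0,0,0,1,0,1,1,0],
  [0,0,0,0,0,1,1,2,1,2,1,0,1,0],
  [0,0,0,1,1,1,0,1,1,2,0,2,0,0],
  [0,0,1,0,0,0,2,1,0,0,2,0,0,0],
  [0,0,0,0,2,1,0,0,1,1,0,0,0,0],
  [0,0,0,1,0,0,0,0,0,0,0,0,0,0]]
  | 16 => [
  [0,0,0,0,0,0,0,0,0,0,0,0,0,0],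
  [0,0,0,0,0,0,0,0,0,3,0,0,0,0],
  [0,3,3,0,0,0,0,0,4,0,1,3,3,0],
  [0,0,3,0,0,0,0,0,0,0,4,1,0,0],
  [0,0,3,3,0,0,0,0,0,4,0,1,1,0],
  [0,0,0,3,0,0,0,3,3,1,1,0,1,0],
  [0,0,0,3,0,0,3,0,1,0,0,2,0,0],
  [0,0,0,3,0,3,0,0,0,0,2,1,0,0],
  [0,0,0,3,3,0,0,0,0,1,0,1,1,0],
  [0,0,0,0,0,1,1,2,1,2,1,0,1,0],
  [0,0,0,1,1,1,0,1,1,2,0,2,0,0],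
  [0,0,1,0,0,0,2,1,0,0,2,0,0,0],
  [0,0,0,0,2,1,0,0,1,1,0,0,0,0],
  [0,0,0,1,0,0,0,0,0,0,0,0,0,0]]
  | 17 => [
  [0,0,0,0,0,0,0,0,0,0,0,0,0,0],
  [0,0,0,0,0,0,0,1,0,4,0,0,0,0],
  [0,3,3,0,0,0,0,0,0,2,1,4,3,0],
  [0,0,3,0,0,0,0,0,2,0,1,2,0,0],
  [0,0,3,3,0,0,0,0,0,0,2,1,1,0],
  [0,0,0,3,0,0,0,3,3,2,1,0,1,0],
  [0,0,0,3,0,0,3,0,1,0,0,2,0,0],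
  [0,0,0,3,0,3,0,0,0,0,2,1,0,0],
  [0,0,0,3,3,0,0,0,0,1,0,1,1,0],
  [0,0,0,0,0,1,1,2,1,2,1,0,1,0],
  [0,0,0,1,1,1,0,1,1,2,0,2,0,0],
  [0,0,1,0,0,0,2,1,0,0,2,0,0,0],
  [0,0,0,0,2,1,0,0,1,1,0,0,0,0],
  [0,0,0,1,0,0,0,0,0,0,0,0,0,0]]
  | _ => []

def dW : ℕ → List (List ℕ)
  | 0 => [
  [0,0,0,0,0,0,0,0,0,0,0,0,0,0],
  [0,0,0,0,0,0,0,0,0,3,0,0,0,0],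
  [0,4,3,0,0,0,0,0,3,0,0,3,3,0],
  [0,0,3,0,0,0,0,0,0,3,3,0,0,0],
  [0,0,3,3,0,0,0,0,0,3,3,0,0,0],
  [0,0,0,3,0,0,0,3,3,0,0,3,0,0],
  [0,0,0,3,0,0,3,0,0,0,3,0,0,0],
  [0,0,0,3,0,3,0,0,0,3,0,0,0,0],
  [0,0,0,3,3,0,0,0,0,0,3,0,0,0],
  [0,0,0,0,0,0,0,0,0,0,0,3,0,0],
  [0,0,0,0,0,0,3,3,3,0,3,0,0,0],
  [0,0,0,0,3,3,0,0,3,3,0,0,0,0],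
  [0,0,0,3,0,0,0,0,0,0,0,0,0,0],
  [0,0,0,0,0,0,0,0,0,0,0,0,0,0]]
  | 1 => [
  [0,0,0,0,0,0,0,0,0,0,0,0,0,0],
  [1,0,1,0,0,0,0,0,0,3,0,0,0,0],
  [0,0,4,0,0,0,0,0,3,0,0,3,3,0],
  [0,1,3,0,0,0,0,0,0,3,3,0,0,0],
  [0,0,3,3,0,0,0,0,0,3,3,0,0,0],
  [0,0,0,3,0,0,0,3,3,0,0,3,0,0],
  [0,0,0,3,0,0,3,0,0,0,3,0,0,0],
  [0,0,0,3,0,3,0,0,0,3,0,0,0,0],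
  [0,0,0,3,3,0,0,0,0,0,3,0,0,0],
  [0,0,0,0,0,0,0,0,0,0,0,3,0,0],
  [0,0,0,0,0,0,3,3,3,0,3,0,0,0],
  [0,0,0,0,3,3,0,0,3,3,0,0,0,0],
  [0,0,0,3,0,0,0,0,0,0,0,0,0,0],
  [0,0,0,0,0,0,0,0,0,0,0,0,0,0]]
  | 2 => [
  [0,0,0,0,0,0,0,0,0,0,0,0,0,0],
  [1,1,1,1,0,0,0,0,0,3,0,0,0,0],
  [0,0,0,1,0,0,0,0,3,0,0,3,3,0],
  [0,1,4,0,0,0,0,0,0,3,3,0,0,0],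
  [0,0,3,3,0,0,0,0,0,3,3,0,0,0],
  [0,0,0,3,0,0,0,3,3,0,0,3,0,0],
  [0,0,0,3,0,0,3,0,0,0,3,0,0,0],
  [0,0,0,3,0,3,0,0,0,3,0,0,0,0],
  [0,0,0,3,3,0,0,0,0,0,3,0,0,0],
  [0,0,0,0,0,0,0,0,0,0,0,3,0,0],
  [0,0,0,0,0,0,3,3,3,0,3,0,0,0],
  [0,0,0,0,3,3,0,0,3,3,0,0,0,0],
  [0,0,0,3,0,0,0,0,0,0,0,0,0,0],
  [0,0,0,0,0,0,0,0,0,0,0,0,0,0]]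
  | 3 => [
  [0,0,0,0,0,0,0,0,0,0,0,0,0,0],
  [1,1,1,1,0,0,0,0,0,3,0,0,0,0],
  [0,1,0,2,0,0,0,0,3,0,0,3,3,0],
  [0,1,0,1,0,0,0,0,0,3,3,0,0,0],
  [0,0,4,3,0,0,0,0,0,3,3,0,0,0],
  [0,0,0,3,0,0,0,3,3,0,0,3,0,0],
  [0,0,0,3,0,0,3,0,0,0,3,0,0,0],
  [0,0,0,3,0,3,0,0,0,3,0,0,0,0],
  [0,0,0,3,3,0,0,0,0,0,3,0,0,0],
  [0,0,0,0,0,0,0,0,0,0,0,3,0,0],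
  [0,0,0,0,0,0,3,3,3,0,3,0,0,0],
  [0,0,0,0,3,3,0,0,3,3,0,0,0,0],
  [0,0,0,3,0,0,0,0,0,0,0,0,0,0],
  [0,0,0,0,0,0,0,0,0,0,0,0,0,0]]
  | 4 => [
  [0,0,0,0,0,0,0,0,0,0,0,0,0,0],
  [1,1,1,1,0,0,0,0,0,3,0,0,0,0],
  [0,1,0,2,0,0,0,0,3,0,0,3,3,0],
  [0,2,0,2,0,0,0,0,0,3,3,0,0,0],
  [0,0,0,4,0,0,0,0,0,3,3,0,0,0],
  [0,0,1,3,0,0,0,3,3,0,0,3,0,0],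
  [0,0,0,3,0,0,3,0,0,0,3,0,0,0],
  [0,0,0,3,0,3,0,0,0,3,0,0,0,0],
  [0,0,0,3,3,0,0,0,0,0,3,0,0,0],
  [0,0,0,0,0,0,0,0,0,0,0,3,0,0],
  [0,0,0,0,0,0,3,3,3,0,3,0,0,0],
  [0,0,0,0,3,3,0,0,3,3,0,0,0,0],
  [0,0,0,3,0,0,0,0,0,0,0,0,0,0],
  [0,0,0,0,0,0,0,0,0,0,0,0,0,0]]
  | 5 => [
  [0,0,0,0,0,0,0,0,0,0,0,0,0,0],
  [1,1,1,1,0,0,0,0,0,3,0,0,0,0],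
  [0,1,0,2,0,0,0,0,3,0,0,3,3,0],
  [0,2,1,2,1,0,0,0,0,3,3,0,0,0],
  [0,0,0,0,1,0,0,0,0,3,3,0,0,0],
  [0,0,1,4,0,0,0,3,3,0,0,3,0,0],
  [0,0,0,3,0,0,3,0,0,0,3,0,0,0],
  [0,0,0,3,0,3,0,0,0,3,0,0,0,0],
  [0,0,0,3,3,0,0,0,0,0,3,0,0,0],
  [0,0,0,0,0,0,0,0,0,0,0,3,0,0],
  [0,0,0,0,0,0,3,3,3,0,3,0,0,0],
  [0,0,0,0,3,3,0,0,3,3,0,0,0,0],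
  [0,0,0,3,0,0,0,0,0,0,0,0,0,0],
  [0,0,0,0,0,0,0,0,0,0,0,0,0,0]]
  | 6 => [
  [0,0,0,0,0,0,0,0,0,0,0,0,0,0],
  [1,1,1,1,0,0,0,0,0,3,0,0,0,0],
  [0,1,0,2,0,0,0,0,3,0,0,3,3,0],
  [0,2,1,2,1,0,0,0,0,3,3,0,0,0],
  [0,0,1,0,2,0,0,0,0,3,3,0,0,0],
  [0,0,1,0,1,0,0,3,3,0,0,3,0,0],
  [0,0,0,4,0,0,3,0,0,0,3,0,0,0],
  [0,0,0,3,0,3,0,0,0,3,0,0,0,0],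
  [0,0,0,3,3,0,0,0,0,0,3,0,0,0],
  [0,0,0,0,0,0,0,0,0,0,0,3,0,0],
  [0,0,0,0,0,0,3,3,3,0,3,0,0,0],
  [0,0,0,0,3,3,0,0,3,3,0,0,0,0],
  [0,0,0,3,0,0,0,0,0,0,0,0,0,0],
  [0,0,0,0,0,0,0,0,0,0,0,0,0,0]]
  | 7 => [
  [0,0,0,0,0,0,0,0,0,0,0,0,0,0],
  [1,1,1,1,0,0,0,0,0,3,0,0,0,0],
  [0,1,0,2,0,0,0,0,3,0,0,3,3,0],
  [0,2,1,2,1,0,0,0,0,3,3,0,0,0],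
  [0,0,1,0,2,0,0,0,0,3,3,0,0,0],
  [0,0,2,0,2,0,0,3,3,0,0,3,0,0],
  [0,0,0,0,1,0,3,0,0,0,3,0,0,0],
  [0,0,0,4,0,3,0,0,0,3,0,0,0,0],
  [0,0,0,3,3,0,0,0,0,0,3,0,0,0],
  [0,0,0,0,0,0,0,0,0,0,0,3,0,0],
  [0,0,0,0,0,0,3,3,3,0,3,0,0,0],
  [0,0,0,0,3,3,0,0,3,3,0,0,0,0],
  [0,0,0,3,0,0,0,0,0,0,0,0,0,0],
  [0,0,0,0,0,0,0,0,0,0,0,0,0,0]]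
  | 8 => [
  [0,0,0,0,0,0,0,0,0,0,0,0,0,0],
  [1,1,1,1,0,0,0,0,0,3,0,0,0,0],
  [0,1,0,2,0,0,0,0,3,0,0,3,3,0],
  [0,2,1,2,1,0,0,0,0,3,3,0,0,0],
  [0,0,1,0,2,0,0,0,0,3,3,0,0,0],
  [0,0,2,0,2,0,0,3,3,0,0,3,0,0],
  [0,0,1,0,2,0,3,0,0,0,3,0,0,0],
  [0,0,0,0,1,3,0,0,0,3,0,0,0,0],
  [0,0,0,4,3,0,0,0,0,0,3,0,0,0],
  [0,0,0,0,0,0,0,0,0,0,0,3,0,0],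
  [0,0,0,0,0,0,3,3,3,0,3,0,0,0],
  [0,0,0,0,3,3,0,0,3,3,0,0,0,0],
  [0,0,0,3,0,0,0,0,0,0,0,0,0,0],
  [0,0,0,0,0,0,0,0,0,0,0,0,0,0]]
  | 9 => [
  [0,0,0,0,0,0,0,0,0,0,0,0,0,0],
  [1,1,1,1,0,0,0,0,0,3,0,0,0,0],
  [0,1,0,2,0,0,0,0,3,0,0,3,3,0],
  [0,2,1,2,1,0,0,0,0,3,3,0,0,0],
  [0,0,1,0,2,0,0,0,0,3,3,0,0,0],
  [0,0,2,0,2,0,0,3,3,0,0,3,0,0],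
  [0,0,1,0,2,0,3,0,0,0,3,0,0,0],
  [0,0,1,0,2,3,0,0,0,3,0,0,0,0],
  [0,0,0,0,4,0,0,0,0,0,3,0,0,0],
  [0,0,0,1,0,0,0,0,0,0,0,3,0,0],
  [0,0,0,0,0,0,3,3,3,0,3,0,0,0],
  [0,0,0,0,3,3,0,0,3,3,0,0,0,0],
  [0,0,0,3,0,0,0,0,0,0,0,0,0,0],
  [0,0,0,0,0,0,0,0,0,0,0,0,0,0]]
  | 10 => [
  [0,0,0,0,0,0,0,0,0,0,0,0,0,0],
  [1,1,1,1,0,0,0,0,0,3,0,0,0,0],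
  [0,1,0,2,0,0,0,0,3,0,0,3,3,0],
  [0,2,1,2,1,0,0,0,0,3,3,0,0,0],
  [0,0,1,0,2,0,0,0,0,3,3,0,0,0],
  [0,0,2,0,2,0,0,3,3,0,0,3,0,0],
  [0,0,1,0,2,0,3,0,0,0,3,0,0,0],
  [0,0,1,1,2,4,0,0,0,3,0,0,0,0],
  [0,0,0,0,0,1,0,0,0,0,3,0,0,0],
  [0,0,0,1,1,0,0,0,0,0,0,3,0,0],
  [0,0,0,0,0,0,3,3,3,0,3,0,0,0],
  [0,0,0,0,3,3,0,0,3,3,0,0,0,0],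
  [0,0,0,3,0,0,0,0,0,0,0,0,0,0],
  [0,0,0,0,0,0,0,0,0,0,0,0,0,0]]
  | 11 => [
  [0,0,0,0,0,0,0,0,0,0,0,0,0,0],
  [1,1,1,1,0,0,0,0,0,3,0,0,0,0],
  [0,1,0,2,0,0,0,0,3,0,0,3,3,0],
  [0,2,1,2,1,0,0,0,0,3,3,0,0,0],
  [0,0,1,0,2,0,0,0,0,3,3,0,0,0],
  [0,0,2,0,2,0,0,3,3,0,0,3,0,0],
  [0,0,1,0,3,0,4,0,0,0,3,0,0,0],
  [0,0,1,1,2,0,1,0,0,3,0,0,0,0],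
  [0,0,0,0,0,2,0,0,0,0,3,0,0,0],
  [0,0,0,1,1,0,0,0,0,0,0,3,0,0],
  [0,0,0,0,0,0,3,3,3,0,3,0,0,0],
  [0,0,0,0,3,3,0,0,3,3,0,0,0,0],
  [0,0,0,3,0,0,0,0,0,0,0,0,0,0],
  [0,0,0,0,0,0,0,0,0,0,0,0,0,0]]
  | 12 => [
  [0,0,0,0,0,0,0,0,0,0,0,0,0,0],
  [1,1,1,1,0,0,0,0,0,3,0,0,0,0],
  [0,1,0,2,0,0,0,0,3,0,0,3,3,0],
  [0,2,1,2,1,0,0,0,0,3,3,0,0,0],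
  [0,0,1,0,2,0,0,0,0,3,3,0,0,0],
  [0,0,2,0,2,1,0,4,3,0,0,3,0,0],
  [0,0,1,0,3,0,0,1,0,0,3,0,0,0],
  [0,0,1,1,2,0,2,0,0,3,0,0,0,0],
  [0,0,0,0,0,2,0,0,0,0,3,0,0,0],
  [0,0,0,1,1,0,0,0,0,0,0,3,0,0],
  [0,0,0,0,0,0,3,3,3,0,3,0,0,0],
  [0,0,0,0,3,3,0,0,3,3,0,0,0,0],
  [0,0,0,3,0,0,0,0,0,0,0,0,0,0],
  [0,0,0,0,0,0,0,0,0,0,0,0,0,0]]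
  | 13 => [
  [0,0,0,0,0,0,0,0,0,0,0,0,0,0],
  [1,1,1,1,0,0,0,0,0,3,0,0,0,0],
  [0,1,0,2,0,0,0,0,3,0,0,3,3,0],
  [0,2,1,2,1,0,0,0,0,3,3,0,0,0],
  [0,0,1,0,2,0,1,0,1,3,3,0,0,0],
  [0,0,2,0,2,1,0,0,4,0,0,3,0,0],
  [0,0,1,0,3,0,0,2,0,0,3,0,0,0],
  [0,0,1,1,2,0,2,0,0,3,0,0,0,0],
  [0,0,0,0,0,2,0,0,0,0,3,0,0,0],
  [0,0,0,1,1,0,0,0,0,0,0,3,0,0],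
  [0,0,0,0,0,0,3,3,3,0,3,0,0,0],
  [0,0,0,0,3,3,0,0,3,3,0,0,0,0],
  [0,0,0,3,0,0,0,0,0,0,0,0,0,0],
  [0,0,0,0,0,0,0,0,0,0,0,0,0,0]]
  | 14 => [
  [0,0,0,0,0,0,0,0,0,0,0,0,0,0],
  [1,1,1,1,0,0,0,0,0,3,0,0,0,0],
  [0,1,0,2,0,0,0,0,3,0,0,3,3,0],
  [0,2,1,2,1,0,0,0,0,3,3,0,0,0],
  [0,0,1,0,2,0,1,1,1,4,3,0,0,0],
  [0,0,2,0,2,1,0,0,0,1,0,3,0,0],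
  [0,0,1,0,3,0,0,2,1,0,3,0,0,0],
  [0,0,1,1,2,0,2,0,0,3,0,0,0,0],
  [0,0,0,0,0,2,0,0,0,0,3,0,0,0],
  [0,0,0,1,1,0,0,0,0,0,0,3,0,0],
  [0,0,0,0,0,0,3,3,3,0,3,0,0,0],
  [0,0,0,0,3,3,0,0,3,3,0,0,0,0],
  [0,0,0,3,0,0,0,0,0,0,0,0,0,0],
  [0,0,0,0,0,0,0,0,0,0,0,0,0,0]]
  | 15 => [
  [0,0,0,0,0,0,0,0,0,0,0,0,0,0],
  [1,1,1,1,0,0,0,0,0,3,0,0,0,0],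
  [0,1,0,2,0,0,0,0,3,0,0,3,3,0],
  [0,2,1,2,1,0,0,0,1,3,4,0,0,0],
  [0,0,1,0,2,0,1,1,1,0,4,0,0,0],
  [0,0,2,0,2,1,0,0,0,2,0,3,0,0],
  [0,0,1,0,3,0,0,2,1,0,3,0,0,0],
  [0,0,1,1,2,0,2,0,0,3,0,0,0,0],
  [0,0,0,0,0,2,0,0,0,0,3,0,0,0],
  [0,0,0,1,1,0,0,0,0,0,0,3,0,0],
  [0,0,0,0,0,0,3,3,3,0,3,0,0,0],
  [0,0,0,0,3,3,0,0,3,3,0,0,0,0],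
  [0,0,0,3,0,0,0,0,0,0,0,0,0,0],
  [0,0,0,0,0,0,0,0,0,0,0,0,0,0]]
  | 16 => [
  [0,0,0,0,0,0,0,0,0,0,0,0,0,0],
  [1,1,1,1,0,0,0,0,0,3,0,0,0,0],
  [0,1,0,2,0,0,0,0,3,1,0,4,3,0],
  [0,2,1,2,1,0,0,0,1,4,0,2,0,0],
  [0,0,1,0,2,0,1,1,1,0,1,1,0,0],
  [0,0,2,0,2,1,0,0,0,2,1,3,0,0],
  [0,0,1,0,3,0,0,2,1,0,3,0,0,0],
  [0,0,1,1,2,0,2,0,0,3,0,0,0,0],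
  [0,0,0,0,0,2,0,0,0,0,3,0,0,0],
  [0,0,0,1,1,0,0,0,0,0,0,3,0,0],
  [0,0,0,0,0,0,3,3,3,0,3,0,0,0],
  [0,0,0,0,3,3,0,0,3,3,0,0,0,0],
  [0,0,0,3,0,0,0,0,0,0,0,0,0,0],
  [0,0,0,0,0,0,0,0,0,0,0,0,0,0]]
  | 17 => [
  [0,0,0,0,0,0,0,0,0,0,0,0,0,0],
  [1,1,1,1,0,0,0,0,0,3,1,0,1,0],
  [0,1,0,2,0,0,0,0,4,1,1,0,4,0],
  [0,2,1,2,1,0,0,0,1,0,1,3,0,0],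
  [0,0,1,0,2,0,1,1,1,1,1,1,0,0],
  [0,0,2,0,2,1,0,0,0,2,1,3,0,0],
  [0,0,1,0,3,0,0,2,1,0,3,0,0,0],
  [0,0,1,1,2,0,2,0,0,3,0,0,0,0],
  [0,0,0,0,0,2,0,0,0,0,3,0,0,0],
  [0,0,0,1,1,0,0,0,0,0,0,3,0,0],
  [0,0,0,0,0,0,3,3,3,0,3,0,0,0],
  [0,0,0,0,3,3,0,0,3,3,0,0,0,0],
  [0,0,0,3,0,0,0,0,0,0,0,0,0,0],
  [0,0,0,0,0,0,0,0,0,0,0,0,0,0]]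
  | _ => []

def dG : List (List ℕ) := [
  [0,0,0,0,0,0,0,0,0,0,0,0,0,0],
  [0,0,0,0,0,0,0,0,0,3,0,0,0,0],
  [0,3,3,0,0,0,0,0,3,0,0,3,3,0],
  [0,0,3,0,0,0,0,0,0,3,3,0,0,0],
  [0,0,3,3,0,0,0,0,0,3,3,0,0,0],
  [0,0,0,3,0,0,0,3,3,0,0,3,0,0],
  [0,0,0,3,0,0,3,0,0,0,3,0,0,0],
  [0,0,0,3,0,3,0,0,0,3,0,0,0,0],
  [0,0,0,3,3,0,0,0,0,0,3,0,0,0],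
  [0,0,0,0,0,0,0,0,0,0,0,3,0,0],
  [0,0,0,0,0,0,3,3,3,0,3,0,0,0],
  [0,0,0,0,3,3,0,0,3,3,0,0,0,0],
  [0,0,0,3,0,0,0,0,0,0,0,0,0,0],
  [0,0,0,0,0,0,0,0,0,0,0,0,0,0]]

lemma theta_NBL : θ NBL = 4 := by decide

lemma boxed_out (d : List (List ℕ)) (p : Cell)
    (h : ¬(-1 ≤ p.1 ∧ p.1 ≤ 12 ∧ -1 ≤ p.2 ∧ p.2 ≤ 12)) : boxed d p = 0 :=
  if_neg h

lemma grid_all {P : Cell → Prop}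
    (hin : ∀ i ∈ Finset.range 16, ∀ j ∈ Finset.range 16, P ((i:ℤ)-2,(j:ℤ)-2))
    (hout : ∀ p : Cell, ¬(-2 ≤ p.1 ∧ p.1 ≤ 13 ∧ -2 ≤ p.2 ∧ p.2 ≤ 13) → P p) :
    ∀ p, P p := by
  intro p
  by_cases h : -2 ≤ p.1 ∧ p.1 ≤ 13 ∧ -2 ≤ p.2 ∧ p.2 ≤ 13
  · have hm := hin (p.1+2).toNat (Finset.mem_range.mpr (by omega))
      (p.2+2).toNat (Finset.mem_range.mpr (by omega))
    have e1 : (((p.1+2).toNat : ℕ) : ℤ) - 2 = p.1 := by omega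
    have e2 : (((p.2+2).toNat : ℕ) : ℤ) - 2 = p.2 := by omega
    rw [e1, e2, Prod.mk.eta] at hm
    exact hm
  · exact hout p h

lemma F_boxed_out (d : List (List ℕ)) (p : Cell)
    (h : ¬(-2 ≤ p.1 ∧ p.1 ≤ 13 ∧ -2 ≤ p.2 ∧ p.2 ≤ 13)) :
    F NBL (boxed d) p = 0 := by
  have h0 : boxed d p = 0 := boxed_out _ _ (by omega)
  have hsum : ∀ p' ∈ NBL, (if θ NBL ≤ boxed d (p - p') then 1 else 0) = 0 := by
    intro p' hp'
    have hmem : p' = ((0:ℤ),(1:ℤ)) ∨ p' = ((1:ℤ),(0:ℤ)) ∨ p' = ((1:ℤ),(-1:ℤ)) ∨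
        p' = ((-1:ℤ),(-1:ℤ)) := by
      simpa [NBL] using hp'
    have h4 : boxed d (p - p') = 0 := by
      rcases hmem with rfl | rfl | rfl | rfl <;>
        exact boxed_out _ _ (by simp only [Prod.fst_sub, Prod.snd_sub]; omega)
    rw [h4, theta_NBL]
    norm_num
  show boxed d p - θ NBL * (if θ NBL ≤ boxed d p then 1 else 0)
      + ∑ p' ∈ NBL, (if θ NBL ≤ boxed d (p - p') then 1 else 0) = 0
  rw [h0, Finset.sum_eq_zero hsum, theta_NBL]
  norm_num

lemma step_eq (d d' : List (List ℕ))
    (hin : ∀ i ∈ Finset.range 16, ∀ j ∈ Finset.range 16,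
      F NBL (boxed d) ((i:ℤ)-2,(j:ℤ)-2) = boxed d' ((i:ℤ)-2,(j:ℤ)-2)) :
    F NBL (boxed d) = boxed d' := by
  funext p
  refine grid_all (P := fun q => F NBL (boxed d) q = boxed d' q) hin ?_ p
  intro q hq
  rw [F_boxed_out d q hq, boxed_out d' q (by omega)]

lemma stepN0 : ∀ i ∈ Finset.range 16, ∀ j ∈ Finset.range 16,
    F NBL (boxed (dN 0)) ((i:ℤ)-2,(j:ℤ)-2) = boxed (dN 1) ((i:ℤ)-2,(j:ℤ)-2) := by
  decide

lemma stepN1 : ∀ i ∈ Finset.range 16, ∀ j ∈ Finset.range 16,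
    F NBL (boxed (dN 1)) ((i:ℤ)-2,(j:ℤ)-2) = boxed (dN 2) ((i:ℤ)-2,(j:ℤ)-2) := by
  decide

lemma stepN2 : ∀ i ∈ Finset.range 16, ∀ j ∈ Finset.range 16,
    F NBL (boxed (dN 2)) ((i:ℤ)-2,(j:ℤ)-2) = boxed (dN 3) ((i:ℤ)-2,(j:ℤ)-2) := by
  decide

lemma stepN3 : ∀ i ∈ Finset.range 16, ∀ j ∈ Finset.range 16,
    F NBL (boxed (dN 3)) ((i:ℤ)-2,(j:ℤ)-2) = boxed (dN 4) ((i:ℤ)-2,(j:ℤ)-2) := by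
  decide

lemma stepN4 : ∀ i ∈ Finset.range 16, ∀ j ∈ Finset.range 16,
    F NBL (boxed (dN 4)) ((i:ℤ)-2,(j:ℤ)-2) = boxed (dN 5) ((i:ℤ)-2,(j:ℤ)-2) := by
  decide

lemma stepN5 : ∀ i ∈ Finset.range 16, ∀ j ∈ Finset.range 16,
    F NBL (boxed (dN 5)) ((i:ℤ)-2,(j:ℤ)-2) = boxed (dN 6) ((i:ℤ)-2,(j:ℤ)-2) := by
  decide

lemma stepN6 : ∀ i ∈ Finset.range 16, ∀ j ∈ Finset.range 16,
    F NBL (boxed (dN 6)) ((i:ℤ)-2,(j:ℤ)-2) = boxed (dN 7) ((i:ℤ)-2,(j:ℤ)-2) := by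
  decide

lemma stepN7 : ∀ i ∈ Finset.range 16, ∀ j ∈ Finset.range 16,
    F NBL (boxed (dN 7)) ((i:ℤ)-2,(j:ℤ)-2) = boxed (dN 8) ((i:ℤ)-2,(j:ℤ)-2) := by
  decide

lemma stepN8 : ∀ i ∈ Finset.range 16, ∀ j ∈ Finset.range 16,
    F NBL (boxed (dN 8)) ((i:ℤ)-2,(j:ℤ)-2) = boxed (dN 9) ((i:ℤ)-2,(j:ℤ)-2) := by
  decide

lemma stepN9 : ∀ i ∈ Finset.range 16, ∀ j ∈ Finset.range 16,
    F NBL (boxed (dN 9)) ((i:ℤ)-2,(j:ℤ)-2) = boxed (dN 10) ((i:ℤ)-2,(j:ℤ)-2) := by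
  decide

lemma stepN10 : ∀ i ∈ Finset.range 16, ∀ j ∈ Finset.range 16,
    F NBL (boxed (dN 10)) ((i:ℤ)-2,(j:ℤ)-2) = boxed (dN 11) ((i:ℤ)-2,(j:ℤ)-2) := by
  decide

lemma stepN11 : ∀ i ∈ Finset.range 16, ∀ j ∈ Finset.range 16,
    F NBL (boxed (dN 11)) ((i:ℤ)-2,(j:ℤ)-2) = boxed (dN 12) ((i:ℤ)-2,(j:ℤ)-2) := by
  decide

lemma stepN12 : ∀ i ∈ Finset.range 16, ∀ j ∈ Finset.range 16,
    F NBL (boxed (dN 12)) ((i:ℤ)-2,(j:ℤ)-2) = boxed (dN 13) ((i:ℤ)-2,(j:ℤ)-2) := by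
  decide

lemma stepN13 : ∀ i ∈ Finset.range 16, ∀ j ∈ Finset.range 16,
    F NBL (boxed (dN 13)) ((i:ℤ)-2,(j:ℤ)-2) = boxed (dN 14) ((i:ℤ)-2,(j:ℤ)-2) := by
  decide

lemma stepN14 : ∀ i ∈ Finset.range 16, ∀ j ∈ Finset.range 16,
    F NBL (boxed (dN 14)) ((i:ℤ)-2,(j:ℤ)-2) = boxed (dN 15) ((i:ℤ)-2,(j:ℤ)-2) := by
  decide

lemma stepN15 : ∀ i ∈ Finset.range 16, ∀ j ∈ Finset.range 16,
    F NBL (boxed (dN 15)) ((i:ℤ)-2,(j:ℤ)-2) = boxed (dN 16) ((i:ℤ)-2,(j:ℤ)-2) := by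
  decide

lemma stepN16 : ∀ i ∈ Finset.range 16, ∀ j ∈ Finset.range 16,
    F NBL (boxed (dN 16)) ((i:ℤ)-2,(j:ℤ)-2) = boxed (dN 17) ((i:ℤ)-2,(j:ℤ)-2) := by
  decide

lemma stepsN : ∀ k, k < 17 → F NBL (boxed (dN k)) = boxed (dN (k+1)) := by
  intro k hk
  interval_cases k
  · exact step_eq _ _ stepN0
  · exact step_eq _ _ stepN1
  · exact step_eq _ _ stepN2
  · exact step_eq _ _ stepN3
  · exact step_eq _ _ stepN4
  · exact step_eq _ _ stepN5
  · exact step_eq _ _ stepN6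
  · exact step_eq _ _ stepN7
  · exact step_eq _ _ stepN8
  · exact step_eq _ _ stepN9
  · exact step_eq _ _ stepN10
  · exact step_eq _ _ stepN11
  · exact step_eq _ _ stepN12
  · exact step_eq _ _ stepN13
  · exact step_eq _ _ stepN14
  · exact step_eq _ _ stepN15
  · exact step_eq _ _ stepN16

lemma baseN_in : ∀ i ∈ Finset.range 16, ∀ j ∈ Finset.range 16,
    (boxed dG + one ((2:ℤ),(11:ℤ))) ((i:ℤ)-2,(j:ℤ)-2) = boxed (dN 0) ((i:ℤ)-2,(j:ℤ)-2) := by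
  decide

lemma baseN : boxed dG + one ((2:ℤ),(11:ℤ)) = boxed (dN 0) := by
  funext p
  refine grid_all (P := fun q => (boxed dG + one ((2:ℤ),(11:ℤ))) q = boxed (dN 0) q) baseN_in ?_ p
  intro q hq
  have h1 : one ((2:ℤ),(11:ℤ)) q = 0 := by
    unfold one
    rw [if_neg]
    intro hqe
    rw [hqe] at hq
    exact hq (by norm_num)
  show boxed dG q + one ((2:ℤ),(11:ℤ)) q = boxed (dN 0) q
  rw [h1, boxed_out _ _ (by omega), boxed_out _ _ (by omega)]

lemma iterN : ∀ t, t ≤ 17 → (F NBL)^[t] (boxed dG + one ((2:ℤ),(11:ℤ))) = boxed (dN t) := by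
  intro t ht
  induction t with
  | zero => simpa using baseN
  | succ k ih =>
    rw [Function.iterate_succ_apply', ih (by omega), stepsN k (by omega)]

lemma stepW0 : ∀ i ∈ Finset.range 16, ∀ j ∈ Finset.range 16,
    F NBL (boxed (dW 0)) ((i:ℤ)-2,(j:ℤ)-2) = boxed (dW 1) ((i:ℤ)-2,(j:ℤ)-2) := by
  decide

lemma stepW1 : ∀ i ∈ Finset.range 16, ∀ j ∈ Finset.range 16,
    F NBL (boxed (dW 1)) ((i:ℤ)-2,(j:ℤ)-2) = boxed (dW 2) ((i:ℤ)-2,(j:ℤ)-2) := by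
  decide

lemma stepW2 : ∀ i ∈ Finset.range 16, ∀ j ∈ Finset.range 16,
    F NBL (boxed (dW 2)) ((i:ℤ)-2,(j:ℤ)-2) = boxed (dW 3) ((i:ℤ)-2,(j:ℤ)-2) := by
  decide

lemma stepW3 : ∀ i ∈ Finset.range 16, ∀ j ∈ Finset.range 16,
    F NBL (boxed (dW 3)) ((i:ℤ)-2,(j:ℤ)-2) = boxed (dW 4) ((i:ℤ)-2,(j:ℤ)-2) := by
  decide

lemma stepW4 : ∀ i ∈ Finset.range 16, ∀ j ∈ Finset.range 16,
    F NBL (boxed (dW 4)) ((i:ℤ)-2,(j:ℤ)-2) = boxed (dW 5) ((i:ℤ)-2,(j:ℤ)-2) := by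
  decide

lemma stepW5 : ∀ i ∈ Finset.range 16, ∀ j ∈ Finset.range 16,
    F NBL (boxed (dW 5)) ((i:ℤ)-2,(j:ℤ)-2) = boxed (dW 6) ((i:ℤ)-2,(j:ℤ)-2) := by
  decide

lemma stepW6 : ∀ i ∈ Finset.range 16, ∀ j ∈ Finset.range 16,
    F NBL (boxed (dW 6)) ((i:ℤ)-2,(j:ℤ)-2) = boxed (dW 7) ((i:ℤ)-2,(j:ℤ)-2) := by
  decide

lemma stepW7 : ∀ i ∈ Finset.range 16, ∀ j ∈ Finset.range 16,
    F NBL (boxed (dW 7)) ((i:ℤ)-2,(j:ℤ)-2) = boxed (dW 8) ((i:ℤ)-2,(j:ℤ)-2) := by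
  decide

lemma stepW8 : ∀ i ∈ Finset.range 16, ∀ j ∈ Finset.range 16,
    F NBL (boxed (dW 8)) ((i:ℤ)-2,(j:ℤ)-2) = boxed (dW 9) ((i:ℤ)-2,(j:ℤ)-2) := by
  decide

lemma stepW9 : ∀ i ∈ Finset.range 16, ∀ j ∈ Finset.range 16,
    F NBL (boxed (dW 9)) ((i:ℤ)-2,(j:ℤ)-2) = boxed (dW 10) ((i:ℤ)-2,(j:ℤ)-2) := by
  decide

lemma stepW10 : ∀ i ∈ Finset.range 16, ∀ j ∈ Finset.range 16,
    F NBL (boxed (dW 10)) ((i:ℤ)-2,(j:ℤ)-2) = boxed (dW 11) ((i:ℤ)-2,(j:ℤ)-2) := by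
  decide

lemma stepW11 : ∀ i ∈ Finset.range 16, ∀ j ∈ Finset.range 16,
    F NBL (boxed (dW 11)) ((i:ℤ)-2,(j:ℤ)-2) = boxed (dW 12) ((i:ℤ)-2,(j:ℤ)-2) := by
  decide

lemma stepW12 : ∀ i ∈ Finset.range 16, ∀ j ∈ Finset.range 16,
    F NBL (boxed (dW 12)) ((i:ℤ)-2,(j:ℤ)-2) = boxed (dW 13) ((i:ℤ)-2,(j:ℤ)-2) := by
  decide

lemma stepW13 : ∀ i ∈ Finset.range 16, ∀ j ∈ Finset.range 16,
    F NBL (boxed (dW 13)) ((i:ℤ)-2,(j:ℤ)-2) = boxed (dW 14) ((i:ℤ)-2,(j:ℤ)-2) := by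
  decide

lemma stepW14 : ∀ i ∈ Finset.range 16, ∀ j ∈ Finset.range 16,
    F NBL (boxed (dW 14)) ((i:ℤ)-2,(j:ℤ)-2) = boxed (dW 15) ((i:ℤ)-2,(j:ℤ)-2) := by
  decide

lemma stepW15 : ∀ i ∈ Finset.range 16, ∀ j ∈ Finset.range 16,
    F NBL (boxed (dW 15)) ((i:ℤ)-2,(j:ℤ)-2) = boxed (dW 16) ((i:ℤ)-2,(j:ℤ)-2) := by
  decide

lemma stepW16 : ∀ i ∈ Finset.range 16, ∀ j ∈ Finset.range 16,
    F NBL (boxed (dW 16)) ((i:ℤ)-2,(j:ℤ)-2) = boxed (dW 17) ((i:ℤ)-2,(j:ℤ)-2) := by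
  decide

lemma stepsW : ∀ k, k < 17 → F NBL (boxed (dW k)) = boxed (dW (k+1)) := by
  intro k hk
  interval_cases k
  · exact step_eq _ _ stepW0
  · exact step_eq _ _ stepW1
  · exact step_eq _ _ stepW2
  · exact step_eq _ _ stepW3
  · exact step_eq _ _ stepW4
  · exact step_eq _ _ stepW5
  · exact step_eq _ _ stepW6
  · exact step_eq _ _ stepW7
  · exact step_eq _ _ stepW8
  · exact step_eq _ _ stepW9
  · exact step_eq _ _ stepW10
  · exact step_eq _ _ stepW11
  · exact step_eq _ _ stepW12
  · exact step_eq _ _ stepW13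
  · exact step_eq _ _ stepW14
  · exact step_eq _ _ stepW15
  · exact step_eq _ _ stepW16

lemma baseW_in : ∀ i ∈ Finset.range 16, ∀ j ∈ Finset.range 16,
    (boxed dG + one ((0:ℤ),(1:ℤ))) ((i:ℤ)-2,(j:ℤ)-2) = boxed (dW 0) ((i:ℤ)-2,(j:ℤ)-2) := by
  decide

lemma baseW : boxed dG + one ((0:ℤ),(1:ℤ)) = boxed (dW 0) := by
  funext p
  refine grid_all (P := fun q => (boxed dG + one ((0:ℤ),(1:ℤ))) q = boxed (dW 0) q) baseW_in ?_ p
  intro q hq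
  have h1 : one ((0:ℤ),(1:ℤ)) q = 0 := by
    unfold one
    rw [if_neg]
    intro hqe
    rw [hqe] at hq
    exact hq (by norm_num)
  show boxed dG q + one ((0:ℤ),(1:ℤ)) q = boxed (dW 0) q
  rw [h1, boxed_out _ _ (by omega), boxed_out _ _ (by omega)]

lemma iterW : ∀ t, t ≤ 17 → (F NBL)^[t] (boxed dG + one ((0:ℤ),(1:ℤ))) = boxed (dW t) := by
  intro t ht
  induction t with
  | zero => simpa using baseW
  | succ k ih =>
    rw [Function.iterate_succ_apply', ih (by omega), stepsW k (by omega)]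

lemma stableG_in : ∀ i ∈ Finset.range 16, ∀ j ∈ Finset.range 16,
    boxed dG ((i:ℤ)-2,(j:ℤ)-2) < 4 := by decide

lemma stableG : Stable NBL (boxed dG) := by
  intro p
  rw [theta_NBL]
  refine grid_all (P := fun q => boxed dG q < 4) stableG_in ?_ p
  intro q hq
  rw [boxed_out _ _ (by omega)]
  norm_num

lemma suppG_in : ∀ i ∈ Finset.range 16, ∀ j ∈ Finset.range 16,
    (¬(0 ≤ (i:ℤ)-2 ∧ (i:ℤ)-2 < 12 ∧ 0 ≤ (j:ℤ)-2 ∧ (j:ℤ)-2 < 12)) →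
    boxed dG ((i:ℤ)-2,(j:ℤ)-2) = 0 := by decide

lemma suppG : ∀ p, p ∉ Rect 12 12 → boxed dG p = 0 := by
  have h := grid_all
    (P := fun q => (¬(0 ≤ q.1 ∧ q.1 < 12 ∧ 0 ≤ q.2 ∧ q.2 < 12)) → boxed dG q = 0)
    suppG_in (fun q hq _ => boxed_out _ _ (by omega))
  intro p hp
  refine h p ?_
  intro hc
  exact hp (by simpa [Rect, Set.mem_setOf_eq] using hc)

lemma sidesN_safe : ∀ t ∈ Finset.range 18, ∀ j ∈ Finset.range 12,
    boxed (dN t) ((0:ℤ),(j:ℤ)) < 4 ∧ boxed (dN t) ((11:ℤ),(j:ℤ)) < 4 := by decide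

lemma sidesW_safe : ∀ t ∈ Finset.range 18, ∀ i ∈ Finset.range 12,
    boxed (dW t) ((i:ℤ),(0:ℤ)) < 4 ∧ boxed (dW t) ((i:ℤ),(11:ℤ)) < 4 := by decide

lemma fireN : θ NBL ≤ boxed (dN 17) ((8:ℤ),(0:ℤ)) := by decide

lemma fireW : θ NBL ≤ boxed (dW 17) ((11:ℤ),(1:ℤ)) := by decide

lemma side0_eq : side 12 12 0 = {p : Cell | p.1 = 0 ∧ 0 ≤ p.2 ∧ p.2 < 12} := by
  simp [side]
lemma side1_eq : side 12 12 1 = {p : Cell | p.2 = 0 ∧ 0 ≤ p.1 ∧ p.1 < 12} := by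
  simp [side]
lemma side2_eq : side 12 12 2 = {p : Cell | p.1 = 11 ∧ 0 ≤ p.2 ∧ p.2 < 12} := by
  have h0 : (2:Fin 4) ≠ 0 := by decide
  have h1 : (2:Fin 4) ≠ 1 := by decide
  have h2 : (2:Fin 4) = 2 := rfl
  simp [side, h0, h1, h2]
lemma side3_eq : side 12 12 3 = {p : Cell | p.2 = 11 ∧ 0 ≤ p.1 ∧ p.1 < 12} := by
  have h0 : (3:Fin 4) ≠ 0 := by decide
  have h1 : (3:Fin 4) ≠ 1 := by decide
  have h2 : (3:Fin 4) ≠ 2 := by decide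
  simp [side, h0, h1, h2]

theorem nbhd195_timed_crossover :
    ∃ g n e s w, IsTimedCrossoverGate
      ({(0,1),(1,0),(1,-1),(-1,-1)} : Finset Cell) 12 12 17 g n e s w := by
  show ∃ g n e s w, IsTimedCrossoverGate NBL 12 12 17 g n e s w
  refine ⟨boxed dG, ((2:ℤ),(11:ℤ)), ((11:ℤ),(1:ℤ)), ((8:ℤ),(0:ℤ)), ((0:ℤ),(1:ℤ)),
    stableG, suppG, ?_, ?_, ?_, ?_, ?_, ?_, ?_, ?_,
    3, 2, 1, 0, ?_, ?_, ?_, ?_, by decide, by decide, by decide, ?_, ?_, ?_, ?_⟩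
  · exact ⟨by norm_num, by norm_num, by norm_num, by norm_num⟩
  · exact ⟨by norm_num, by norm_num, by norm_num, by norm_num⟩
  · exact ⟨by norm_num, by norm_num, by norm_num, by norm_num⟩
  · exact ⟨by norm_num, by norm_num, by norm_num, by norm_num⟩
  · simp [Corners, Prod.ext_iff]
  · simp [Corners, Prod.ext_iff]
  · simp [Corners, Prod.ext_iff]
  · simp [Corners, Prod.ext_iff]
  · rw [side3_eq]; exact ⟨rfl, by norm_num, by norm_num⟩
  · rw [side2_eq]; exact ⟨rfl, by norm_num, by norm_num⟩
  · rw [side1_eq]; exact ⟨rfl, by norm_num, by norm_num⟩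
  · rw [side0_eq]; exact ⟨rfl, by norm_num, by norm_num⟩
  · rw [iterN 17 le_rfl]
    exact fireN
  · intro p hp t ht
    rw [iterN t ht, theta_NBL]
    rw [side0_eq, side2_eq] at hp
    obtain ⟨a, b⟩ := p
    have hs := sidesN_safe t (Finset.mem_range.mpr (by omega))
    simp only [Set.mem_union, Set.mem_setOf_eq] at hp
    rcases hp with ⟨ha, hb0, hb1⟩ | ⟨ha, hb0, hb1⟩ <;>
      [skip; skip] <;>
      · have hb : b = ((b.toNat : ℕ) : ℤ) := by omega
        have hss := hs b.toNat (Finset.mem_range.mpr (by omega))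
        subst ha
        rw [hb]
        first
        | exact hss.1
        | exact hss.2
  · rw [iterW 17 le_rfl]
    exact fireW
  · intro p hp t ht
    rw [iterW t ht, theta_NBL]
    rw [side3_eq, side1_eq] at hp
    obtain ⟨a, b⟩ := p
    have hs := sidesW_safe t (Finset.mem_range.mpr (by omega))
    simp only [Set.mem_union, Set.mem_setOf_eq] at hp
    rcases hp with ⟨hb, ha0, ha1⟩ | ⟨hb, ha0, ha1⟩ <;>
      · have ha : a = ((a.toNat : ℕ) : ℤ) := by omega
        have hss := hs a.toNat (Finset.mem_range.mpr (by omega))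
        subst hb
        rw [ha]
        first
        | exact hss.1
        | exact hss.2

end Sandpile
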